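/- Let X, Y be complex Banach spaces and T, A : X → Y bounded linear operators with T ≠ 0. Suppose that for each unimodular α with arg α ∈ [0, π) there exist sequences {xₙ}, {yₙ} of unit vectors in X and sequences {εₙ}, {δₙ} of positive reals with εₙ → 0, δₙ → 0, ‖Txₙ‖ → ‖T‖, ‖Tyₙ‖ → ‖T‖, and for all n: ‖Txₙ + tαAxₙ‖ ≥ √(1−εₙ²)‖Txₙ‖ for all t ≥ 0 and ‖Tyₙ + tαAyₙ‖ ≥ √(1−δₙ²)‖Tyₙ‖ for all t ≤ 0. Then T ⊥_B A. -/

import Mathlib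

open Filter Topology

private lemma aux_norm_ge {X Y : Type*} [NormedAddCommGroup X] [NormedSpace ℂ X]
    [NormedAddCommGroup Y] [NormedSpace ℂ Y]
    (T A : X →L[ℂ] Y) (lam : ℂ) (x : ℕ → X) (ε : ℕ → ℝ)
    (hx1 : ∀ n, ‖x n‖ = 1) (hε : Tendsto ε atTop (𝓝 0))
    (hTx : Tendsto (fun n => ‖T (x n)‖) atTop (𝓝 ‖T‖))
    (hb : ∀ n, ‖T (x n) + lam • A (x n)‖ ≥ Real.sqrt (1 - ε n ^ 2) * ‖T (x n)‖) :
    ‖T + lam • A‖ ≥ ‖T‖ := by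
  have h1 : Tendsto (fun n => Real.sqrt (1 - ε n ^ 2)) atTop (𝓝 1) := by
    have h2 : Tendsto (fun n => 1 - ε n ^ 2) atTop (𝓝 (1 - 0 ^ 2)) :=
      tendsto_const_nhds.sub (hε.pow 2)
    have h3 := (Real.continuous_sqrt.tendsto (1 - 0 ^ 2)).comp h2
    simpa [Function.comp_def] using h3
  have hlim : Tendsto (fun n => Real.sqrt (1 - ε n ^ 2) * ‖T (x n)‖) atTop (𝓝 ‖T‖) := by
    have := h1.mul hTx
    simpa using this
  refine le_of_tendsto hlim (Eventually.of_forall fun n => ?_)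
  calc Real.sqrt (1 - ε n ^ 2) * ‖T (x n)‖ ≤ ‖T (x n) + lam • A (x n)‖ := hb n
    _ = ‖(T + lam • A) (x n)‖ := by simp
    _ ≤ ‖T + lam • A‖ * ‖x n‖ := (T + lam • A).le_opNorm (x n)
    _ = ‖T + lam • A‖ := by rw [hx1 n, mul_one]

theorem stmt_7 {X Y : Type*} [NormedAddCommGroup X] [NormedSpace ℂ X] [CompleteSpace X]
    [NormedAddCommGroup Y] [NormedSpace ℂ Y] [CompleteSpace Y]
    (T A : X →L[ℂ] Y) (hT : T ≠ 0)
    (h : ∀ α : ℂ, ‖α‖ = 1 → α.arg ∈ Set.Ico 0 Real.pi →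
      ∃ (x y : ℕ → X) (ε δ : ℕ → ℝ),
        (∀ n, ‖x n‖ = 1) ∧ (∀ n, ‖y n‖ = 1) ∧
        (∀ n, 0 < ε n) ∧ (∀ n, 0 < δ n) ∧
        Tendsto ε atTop (𝓝 0) ∧ Tendsto δ atTop (𝓝 0) ∧
        Tendsto (fun n => ‖T (x n)‖) atTop (𝓝 ‖T‖) ∧
        Tendsto (fun n => ‖T (y n)‖) atTop (𝓝 ‖T‖) ∧
        (∀ n, ∀ t : ℝ, 0 ≤ t →
          ‖T (x n) + ((t : ℂ) * α) • A (x n)‖ ≥ Real.sqrt (1 - (ε n) ^ 2) * ‖T (x n)‖) ∧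
        (∀ n, ∀ t : ℝ, t ≤ 0 →
          ‖T (y n) + ((t : ℂ) * α) • A (y n)‖ ≥ Real.sqrt (1 - (δ n) ^ 2) * ‖T (y n)‖)) :
    ∀ lam : ℂ, ‖T + lam • A‖ ≥ ‖T‖ := by
  intro lam
  rcases eq_or_ne lam 0 with rfl | hlam
  · simp
  have hnl : (0:ℝ) < ‖lam‖ := norm_pos_iff.mpr hlam
  by_cases hc : lam.arg ∈ Set.Ico 0 Real.pi
  · set α : ℂ := ((‖lam‖⁻¹ : ℝ) : ℂ) * lam with hα
    have hα1 : ‖α‖ = 1 := by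
      rw [hα, norm_mul, Complex.norm_real, Real.norm_of_nonneg (by positivity)]
      field_simp
    have hαarg : α.arg = lam.arg := Complex.arg_real_mul lam (by positivity)
    obtain ⟨x, y, ε, δ, hx1, hy1, hεp, hδp, hε, hδ, hTx, hTy, hbx, hby⟩ :=
      h α hα1 (hαarg ▸ hc)
    have hlam_eq : ((‖lam‖ : ℝ) : ℂ) * α = lam := by
      rw [hα, ← mul_assoc, ← Complex.ofReal_mul, mul_inv_cancel₀ hnl.ne', Complex.ofReal_one,
        one_mul]
    refine aux_norm_ge T A lam x ε hx1 hε hTx fun n => ?_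
    have := hbx n ‖lam‖ (norm_nonneg lam)
    rwa [hlam_eq] at this
  · set α : ℂ := ((‖lam‖⁻¹ : ℝ) : ℂ) * (-lam) with hα
    have hα1 : ‖α‖ = 1 := by
      rw [hα, norm_mul, norm_neg, Complex.norm_real, Real.norm_of_nonneg (by positivity)]
      field_simp
    have hαarg : α.arg = (-lam).arg := Complex.arg_real_mul (-lam) (by positivity)
    have hmem : α.arg ∈ Set.Ico 0 Real.pi := by
      rw [hαarg]
      rcases lt_or_ge lam.im 0 with him | him
      · rw [Complex.arg_neg_eq_arg_add_pi_of_im_neg him]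
        have h1 : lam.arg < 0 := Complex.arg_neg_iff.mpr him
        have h2 : -Real.pi < lam.arg := Complex.neg_pi_lt_arg lam
        constructor <;> [linarith; linarith]
      · have h1 : 0 ≤ lam.arg := Complex.arg_nonneg_iff.mpr him
        have h2 : lam.arg = Real.pi := by
          rcases (Complex.arg_le_pi lam).lt_or_eq with h3 | h3
          · exact absurd ⟨h1, h3⟩ hc
          · exact h3
        obtain ⟨hre, him0⟩ := Complex.arg_eq_pi_iff.mp h2
        have : (-lam).arg = 0 :=
          Complex.arg_eq_zero_iff.mpr ⟨by simp [Complex.neg_re]; linarith,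
            by simp [Complex.neg_im, him0]⟩
        rw [this]
        exact ⟨le_refl 0, Real.pi_pos⟩
    obtain ⟨x, y, ε, δ, hx1, hy1, hεp, hδp, hε, hδ, hTx, hTy, hbx, hby⟩ := h α hα1 hmem
    have hlam_eq : ((-‖lam‖ : ℝ) : ℂ) * α = lam := by
      rw [hα, ← mul_assoc, ← Complex.ofReal_mul]
      rw [neg_mul, mul_inv_cancel₀ hnl.ne']
      simp
    refine aux_norm_ge T A lam y δ hy1 hδ hTy fun n => ?_
    have := hby n (-‖lam‖) (by linarith)
    rwa [hlam_eq] at this
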